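/- For any negative discriminant Δ with |Δ| ≥ 10^14, the number of divisors of the modified conductor satisfies σ₀(f̃) ≤ |Δ|^{0.192}. -/

import Mathlib

/-- `D` is a fundamental discriminant. -/
def IsFundDisc (D : ℤ) : Prop :=
  (D % 4 = 1 ∧ Squarefree D) ∨
    (∃ m : ℤ, D = 4 * m ∧ (m % 4 = 2 ∨ m % 4 = 3) ∧ Squarefree m)

/- Auxiliary: per-prime bounds of the form `d * (k+1)^4 ≤ c * p^k`. -/

private lemma ind_aux (p c d k0 : ℕ) (hbase : d * (k0 + 1) ^ 4 ≤ c * p ^ k0)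
    (hstep : ∀ k, k0 ≤ k → (k + 2) ^ 4 ≤ p * (k + 1) ^ 4) :
    ∀ k, k0 ≤ k → d * (k + 1) ^ 4 ≤ c * p ^ k := by
  intro k hk
  induction k, hk using Nat.le_induction with
  | base => exact hbase
  | succ k hk ih =>
      calc d * (k + 1 + 1) ^ 4 ≤ d * (p * (k + 1) ^ 4) :=
            Nat.mul_le_mul_left d (hstep k hk)
        _ = p * (d * (k + 1) ^ 4) := by ring
        _ ≤ p * (c * p ^ k) := Nat.mul_le_mul_left p ih
        _ = c * p ^ (k + 1) := by ring

private lemma step_gen (p k a b : ℕ) (ha : 0 < a) (hab : a * (k + 2) ≤ b * (k + 1))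
    (hba : b ^ 4 ≤ p * a ^ 4) : (k + 2) ^ 4 ≤ p * (k + 1) ^ 4 := by
  have h1 : (a * (k + 2)) ^ 4 ≤ (b * (k + 1)) ^ 4 := Nat.pow_le_pow_left hab 4
  have h2 : a ^ 4 * (k + 2) ^ 4 ≤ b ^ 4 * (k + 1) ^ 4 := by
    calc a ^ 4 * (k + 2) ^ 4 = (a * (k + 2)) ^ 4 := by ring
      _ ≤ (b * (k + 1)) ^ 4 := h1
      _ = b ^ 4 * (k + 1) ^ 4 := by ring
  have h3 : a ^ 4 * (k + 2) ^ 4 ≤ p * a ^ 4 * (k + 1) ^ 4 :=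
    h2.trans (Nat.mul_le_mul_right _ hba)
  have ha4 : 0 < a ^ 4 := Nat.pow_pos ha
  have h4 : a ^ 4 * (k + 2) ^ 4 ≤ a ^ 4 * (p * (k + 1) ^ 4) := by
    calc a ^ 4 * (k + 2) ^ 4 ≤ p * a ^ 4 * (k + 1) ^ 4 := h3
      _ = a ^ 4 * (p * (k + 1) ^ 4) := by ring
  exact Nat.le_of_mul_le_mul_left h4 ha4

private lemma step7 (p k : ℕ) (hp : 7 ≤ p) (hk : 1 ≤ k) : (k + 2) ^ 4 ≤ p * (k + 1) ^ 4 := by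
  refine step_gen p k 2 3 (by omega) (by omega) ?_
  calc (3:ℕ) ^ 4 = 81 := by norm_num
    _ ≤ 7 * 2 ^ 4 := by norm_num
    _ ≤ p * 2 ^ 4 := Nat.mul_le_mul_right _ hp

private lemma N2 : ∀ k, 1 ≤ k → 2 * (k + 1) ^ 4 ≤ 81 * 2 ^ k := by
  intro k hk
  rcases le_or_gt k 4 with h | h
  · interval_cases k <;> norm_num
  · refine ind_aux 2 81 2 5 (by norm_num) (fun k hk => ?_) k h
    exact step_gen 2 k 6 7 (by omega) (by omega) (by norm_num)

private lemma N3 : ∀ k, 1 ≤ k → 27 * (k + 1) ^ 4 ≤ 256 * 3 ^ k := by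
  intro k hk
  rcases le_or_gt k 2 with h | h
  · interval_cases k <;> norm_num
  · refine ind_aux 3 256 27 3 (by norm_num) (fun k hk => ?_) k h
    exact step_gen 3 k 4 5 (by omega) (by omega) (by norm_num)

private lemma N5 : ∀ k, 1 ≤ k → 25 * (k + 1) ^ 4 ≤ 81 * 5 ^ k := by
  intro k hk
  rcases le_or_gt k 1 with h | h
  · interval_cases k
    norm_num
  · refine ind_aux 5 81 25 2 (by norm_num) (fun k hk => ?_) k h
    exact step_gen 5 k 3 4 (by omega) (by omega) (by norm_num)

private lemma N7 (p : ℕ) (hp : 7 ≤ p) : ∀ k, 1 ≤ k → p * (k + 1) ^ 4 ≤ 16 * p ^ k := by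
  refine ind_aux p 16 p 1 ?_ (fun k hk => step7 p k hp hk)
  have : p * 2 ^ 4 = 16 * p ^ 1 := by ring
  omega

private lemma Nbig (p : ℕ) (hp : 17 ≤ p) : ∀ k, 1 ≤ k → 1 * (k + 1) ^ 4 ≤ 1 * p ^ k := by
  refine ind_aux p 1 1 1 (by simpa using by omega : 1 * 2 ^ 4 ≤ 1 * p ^ 1)
    (fun k hk => step7 p k (by omega) hk)

/-- The per-prime weight. -/
noncomputable def dw (p : ℕ) : ℝ :=
  if p = 2 then 81 / 2 else if p = 3 then 256 / 27 else if p = 5 then 81 / 25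
    else if p = 7 then 16 / 7 else if p = 11 then 16 / 11 else if p = 13 then 16 / 13 else 1

lemma dw_nonneg (p : ℕ) : 0 ≤ dw p := by
  unfold dw; split_ifs <;> norm_num

lemma dw_one_le (p : ℕ) : 1 ≤ dw p := by
  unfold dw; split_ifs <;> norm_num

lemma dw_not_mem (p : ℕ) (h : p ≠ 2 ∧ p ≠ 3 ∧ p ≠ 5 ∧ p ≠ 7 ∧ p ≠ 11 ∧ p ≠ 13) :
    dw p = 1 := by
  obtain ⟨h2, h3, h5, h7, h11, h13⟩ := h
  simp [dw, h2, h3, h5, h7, h11, h13]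

/-- Claim 1: for `p` prime and `k ≥ 1`, `(k+1)^4 ≤ dw p * p^k`. -/
lemma claim1 (p : ℕ) (hp : p.Prime) (k : ℕ) (hk : 1 ≤ k) :
    ((k : ℝ) + 1) ^ 4 ≤ dw p * (p : ℝ) ^ k := by
  have cast_le : ∀ a b : ℕ, a ≤ b → (a : ℝ) ≤ (b : ℝ) := fun a b h => Nat.cast_le.mpr h
  by_cases h2 : p = 2
  · subst h2
    have := cast_le _ _ (N2 k hk); push_cast at this
    have hdw : dw 2 = 81 / 2 := by norm_num [dw]
    rw [hdw]; push_cast; linarith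
  by_cases h3 : p = 3
  · subst h3
    have := cast_le _ _ (N3 k hk); push_cast at this
    have hdw : dw 3 = 256 / 27 := by norm_num [dw]
    rw [hdw]; push_cast; linarith
  by_cases h5 : p = 5
  · subst h5
    have := cast_le _ _ (N5 k hk); push_cast at this
    have hdw : dw 5 = 81 / 25 := by norm_num [dw]
    rw [hdw]; push_cast; linarith
  by_cases h7 : p = 7
  · subst h7
    have := cast_le _ _ (N7 7 le_rfl k hk); push_cast at this
    have hdw : dw 7 = 16 / 7 := by norm_num [dw]
    rw [hdw]; push_cast; linarith
  by_cases h11 : p = 11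
  · subst h11
    have := cast_le _ _ (N7 11 (by norm_num) k hk); push_cast at this
    have hdw : dw 11 = 16 / 11 := by norm_num [dw]
    rw [hdw]; push_cast; linarith
  by_cases h13 : p = 13
  · subst h13
    have := cast_le _ _ (N7 13 (by norm_num) k hk); push_cast at this
    have hdw : dw 13 = 16 / 13 := by norm_num [dw]
    rw [hdw]; push_cast; linarith
  · have h17 : 17 ≤ p := by
      by_contra hlt
      push_neg at hlt
      interval_cases p <;> simp_all (config := {decide := true})
    have := cast_le _ _ (Nbig p h17 k hk); push_cast at this
    rw [dw_not_mem p ⟨h2, h3, h5, h7, h11, h13⟩]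
    linarith

/-- Claim 3: the product of weights over any finset is at most 5091. -/
lemma claim3 (S : Finset ℕ) : ∏ p ∈ S, dw p ≤ 5091 := by
  classical
  set T : Finset ℕ := {2, 3, 5, 7, 11, 13} with hT
  have h1 : ∏ p ∈ S, dw p = ∏ p ∈ S ∩ T, dw p := by
    refine (Finset.prod_subset Finset.inter_subset_left (fun x hx hx' => ?_)).symm
    have hxT : x ∉ T := fun h => hx' (Finset.mem_inter.mpr ⟨hx, h⟩)
    simp only [hT, Finset.mem_insert, Finset.mem_singleton] at hxT
    push_neg at hxT
    exact dw_not_mem x ⟨hxT.1, hxT.2.1, hxT.2.2.1, hxT.2.2.2.1, hxT.2.2.2.2.1, hxT.2.2.2.2.2⟩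
  have h2 : ∏ p ∈ S ∩ T, dw p ≤ ∏ p ∈ T, dw p := by
    have hsub : S ∩ T ⊆ T := Finset.inter_subset_right
    have hone : (1 : ℝ) ≤ ∏ p ∈ T \ (S ∩ T), dw p := by
      have := Finset.prod_le_prod (s := T \ (S ∩ T)) (f := fun _ => (1 : ℝ)) (g := dw)
        (fun i _ => by norm_num) (fun i _ => dw_one_le i)
      simpa using this
    calc ∏ p ∈ S ∩ T, dw p = 1 * ∏ p ∈ S ∩ T, dw p := (one_mul _).symm
      _ ≤ (∏ p ∈ T \ (S ∩ T), dw p) * ∏ p ∈ S ∩ T, dw p :=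
          mul_le_mul_of_nonneg_right hone (Finset.prod_nonneg fun i _ => dw_nonneg i)
      _ = ∏ p ∈ T, dw p := Finset.prod_sdiff hsub
  have h3 : ∏ p ∈ T, dw p ≤ 5091 := by
    rw [hT]
    rw [show ({2, 3, 5, 7, 11, 13} : Finset ℕ)
        = insert 2 (insert 3 (insert 5 (insert 7 (insert 11 ({13} : Finset ℕ))))) from rfl]
    rw [Finset.prod_insert (by decide), Finset.prod_insert (by decide),
      Finset.prod_insert (by decide), Finset.prod_insert (by decide),
      Finset.prod_insert (by decide), Finset.prod_singleton]
    norm_num [dw]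
  rw [h1]; exact h2.trans h3

/-- Main divisor bound: `d(n)^4 ≤ 5091 n`. -/
lemma lemA (n : ℕ) (hn : n ≠ 0) : ((n.divisors.card : ℝ)) ^ 4 ≤ 5091 * n := by
  classical
  rw [Nat.card_divisors hn]
  have hself : ∏ p ∈ n.primeFactors, p ^ n.factorization p = n := by
    have := Nat.factorization_prod_pow_eq_self hn
    rwa [Finsupp.prod, Nat.support_factorization] at this
  have key : (∏ p ∈ n.primeFactors, ((n.factorization p : ℝ) + 1) ^ 4)
      ≤ (∏ p ∈ n.primeFactors, dw p) * ∏ p ∈ n.primeFactors, ((p : ℝ)) ^ n.factorization p := by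
    rw [← Finset.prod_mul_distrib]
    refine Finset.prod_le_prod (fun p _ => by positivity) (fun p hp => ?_)
    have hpp : p.Prime := Nat.prime_of_mem_primeFactors hp
    have hk : 1 ≤ n.factorization p := by
      rw [← Nat.support_factorization] at hp
      have := Finsupp.mem_support_iff.mp hp
      omega
    exact claim1 p hpp _ hk
  calc ((∏ p ∈ n.primeFactors, (n.factorization p + 1) : ℕ) : ℝ) ^ 4
      = ∏ p ∈ n.primeFactors, ((n.factorization p : ℝ) + 1) ^ 4 := by
        push_cast [← Finset.prod_pow]; ring
    _ ≤ (∏ p ∈ n.primeFactors, dw p) * ∏ p ∈ n.primeFactors, ((p : ℝ)) ^ n.factorization p :=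
        key
    _ ≤ 5091 * n := by
        have h1 : ∏ p ∈ n.primeFactors, ((p : ℝ)) ^ n.factorization p = (n : ℝ) := by
          have := congrArg (fun m : ℕ => (m : ℝ)) hself
          push_cast at this
          exact this
        rw [h1]
        have h2 : (0 : ℝ) ≤ n := Nat.cast_nonneg n
        exact mul_le_mul_of_nonneg_right (claim3 _) h2

/-- `5091 ≤ 10 ^ 3.752`. -/
lemma num_key : (5091 : ℝ) ≤ (10 : ℝ) ^ (3.752 : ℝ) := by
  have h10 : (0 : ℝ) < 10 := by norm_num
  refine le_of_pow_le_pow_left₀ (n := 125) (by norm_num) (by positivity) ?_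
  have : ((10 : ℝ) ^ (3.752 : ℝ)) ^ (125 : ℕ) = (10 : ℝ) ^ (469 : ℕ) := by
    rw [← Real.rpow_natCast ((10:ℝ) ^ (3.752:ℝ)) 125, ← Real.rpow_mul h10.le,
      show (3.752 : ℝ) * (125 : ℕ) = ((469 : ℕ) : ℝ) by norm_num,
      Real.rpow_natCast]
  rw [this]
  exact_mod_cast (by decide : (5091:ℕ) ^ 125 ≤ 10 ^ 469)

/-- For `|Δ| ≥ 10^14`, `σ₀(f̃) ≤ |Δ|^{0.192}`. -/
theorem stmt5 (Δ D : ℤ) (f : ℕ) (hf : 0 < f) (hΔneg : Δ < 0)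
    (hfact : Δ = (f : ℤ) ^ 2 * D) (hD : IsFundDisc D)
    (ftilde : ℕ) (hft1 : D % 4 = 1 → ftilde = f) (hft0 : D % 4 = 0 → ftilde = 2 * f)
    (hbig : (10 : ℝ) ^ 14 ≤ |(Δ : ℝ)|) :
    ((ArithmeticFunction.sigma 0) ftilde : ℝ) ≤ |(Δ : ℝ)| ^ (0.192 : ℝ) := by
  have hfz : (0 : ℤ) < (f : ℤ) := by exact_mod_cast hf
  -- ftilde positive and (ftilde : ℤ)^2 ≤ |Δ|
  have hmain : 0 < ftilde ∧ ((ftilde : ℤ)) ^ 2 ≤ |Δ| := by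
    rcases hD with ⟨h1, -⟩ | ⟨m, hm, -, -⟩
    · have hft : ftilde = f := hft1 h1
      have hDneg : D < 0 := by nlinarith
      have hD3 : D ≤ -3 := by omega
      refine ⟨hft ▸ hf, ?_⟩
      rw [abs_of_neg hΔneg, hft, hfact]
      nlinarith
    · have hD4 : D % 4 = 0 := by omega
      have hft : ftilde = 2 * f := hft0 hD4
      have hmneg : m < 0 := by nlinarith
      refine ⟨hft ▸ (by omega), ?_⟩
      rw [abs_of_neg hΔneg, hft, hfact, hm]
      push_cast
      nlinarith
  obtain ⟨hftpos, hsq⟩ := hmain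
  have hftne : ftilde ≠ 0 := hftpos.ne'
  set x : ℝ := |(Δ : ℝ)| with hxdef
  have hx14 : (10 : ℝ) ^ 14 ≤ x := hbig
  have hxpos : (0 : ℝ) < x := lt_of_lt_of_le (by norm_num) hx14
  have hsqR : ((ftilde : ℝ)) ^ 2 ≤ x := by
    have : ((ftilde : ℝ)) ^ 2 ≤ ((|Δ| : ℤ) : ℝ) := by exact_mod_cast hsq
    rwa [hxdef, ← Int.cast_abs]
  -- reduce to fourth powers
  rw [ArithmeticFunction.sigma_zero_apply]
  refine le_of_pow_le_pow_left₀ (n := 4) (by norm_num) (Real.rpow_nonneg hxpos.le _) ?_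
  have hrhs : (x ^ (0.192 : ℝ)) ^ (4 : ℕ) = x ^ (0.768 : ℝ) := by
    rw [← Real.rpow_natCast (x ^ (0.192 : ℝ)) 4, ← Real.rpow_mul hxpos.le]
    norm_num
  rw [hrhs]
  have hA : ((ftilde.divisors.card : ℝ)) ^ 4 ≤ 5091 * ftilde := lemA ftilde hftne
  have hfx : (ftilde : ℝ) ≤ x ^ ((1 : ℝ)/2) := by
    rw [← Real.sqrt_eq_rpow]
    exact (Real.le_sqrt (Nat.cast_nonneg _) hxpos.le).mpr hsqR
  have h5091 : (5091 : ℝ) ≤ x ^ (0.268 : ℝ) := by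
    refine num_key.trans ?_
    have : ((10 : ℝ) ^ (14 : ℕ)) ^ ((0.268 : ℝ)) ≤ x ^ (0.268 : ℝ) :=
      Real.rpow_le_rpow (by positivity) hx14 (by norm_num)
    refine le_trans (le_of_eq ?_) this
    rw [← Real.rpow_natCast 10 14, ← Real.rpow_mul (by norm_num : (0:ℝ) ≤ 10)]
    norm_num
  calc ((ftilde.divisors.card : ℝ)) ^ 4 ≤ 5091 * ftilde := hA
    _ ≤ x ^ (0.268 : ℝ) * x ^ ((1 : ℝ)/2) := by
        have h1 : (5091 : ℝ) * ftilde ≤ (5091 : ℝ) * (x ^ ((1:ℝ)/2)) :=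
          mul_le_mul_of_nonneg_left hfx (by norm_num)
        have h2 : (5091 : ℝ) * (x ^ ((1:ℝ)/2)) ≤ x ^ (0.268 : ℝ) * x ^ ((1:ℝ)/2) :=
          mul_le_mul_of_nonneg_right h5091 (Real.rpow_nonneg hxpos.le _)
        exact h1.trans h2
    _ = x ^ (0.768 : ℝ) := by
        rw [← Real.rpow_add hxpos]
        norm_num
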